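/- Assume {𝒢, ℋ} is a turn pair, where 𝒢 and ℋ are DAGs with the same skeleton G and G is a tree. Then there exist a DAG 𝒟 and nodes i', j' such that: (1) 𝒢 and 𝒟 are Markov equivalent; (2) i' → j' is an arrow of 𝒟; (3) the graph 𝒟_{i'←j'} obtained from 𝒟 by reversing i' → j' is a DAG; and (4) ℋ and 𝒟_{i'←j'} are Markov equivalent. -/

import Mathlib

open Classical

/-- A DAG on vertex type `V`: a directed graph (adjacency relation) with no directed cycles. -/
structure DAG (V : Type) where
  adj : V → V → Prop
  acyclic : ∀ v, ¬ Relation.TransGen adj v v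

namespace DAG

variable {V : Type}

/-- The skeleton of a DAG: the undirected graph obtained by forgetting directions. -/
def skeleton (D : DAG V) : SimpleGraph V where
  Adj i j := D.adj i j ∨ D.adj j i
  symm := by constructor; intro i j h; exact h.symm
  loopless := by
    constructor
    intro i h
    rcases h with h | h <;> exact D.acyclic i (Relation.TransGen.single h)

/-- The characteristic imset of a DAG, as a vector indexed by finite vertex sets
(coordinates on sets of size `< 2` are identically zero). -/
noncomputable def imset (D : DAG V) (S : Finset V) : ℝ :=
  if 2 ≤ S.card ∧ ∃ i ∈ S, ∀ j ∈ S, j ≠ i → D.adj j i then 1 else 0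

/-- `D.IsVStructure i j k` means `i → j ← k` is an induced subgraph of `D`
(`i` and `k` non-adjacent). -/
def IsVStructure (D : DAG V) (i j k : V) : Prop :=
  i ≠ k ∧ D.adj i j ∧ D.adj k j ∧ ¬ D.adj i k ∧ ¬ D.adj k i

end DAG

/-- Two DAGs are Markov equivalent iff they have the same skeleton and the same
v-structures. -/
def MarkovEquiv {V : Type} (D E : DAG V) : Prop :=
  D.skeleton = E.skeleton ∧ ∀ i j k, D.IsVStructure i j k ↔ E.IsVStructure i j k

/-- An arrow `i → j` of `D` is essential if it occurs in every DAG Markov equivalent to `D`. -/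
def DAG.Essential {V : Type} (D : DAG V) (i j : V) : Prop :=
  D.adj i j ∧ ∀ E : DAG V, MarkovEquiv D E → E.adj i j

/-- The characteristic imset polytope of an undirected graph `G`: the convex hull of the
characteristic imsets of all DAGs with skeleton `G`. -/
noncomputable def CIM {V : Type} (G : SimpleGraph V) : Set (Finset V → ℝ) :=
  convexHull ℝ { f | ∃ D : DAG V, D.skeleton = G ∧ f = D.imset }

/-- `conv(u,v)` is an edge (one-dimensional face) of `P`: there is a linear functional whose
maximum over `P` is attained exactly on the segment from `u` to `v`. -/
def IsPolytopeEdge {E : Type*} [AddCommGroup E] [Module ℝ E] (P : Set E) (u v : E) : Prop :=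
  u ≠ v ∧ ∃ φ : E →ₗ[ℝ] ℝ, (∀ x ∈ P, φ x ≤ φ u) ∧ ∀ x ∈ P, (φ x = φ u ↔ x ∈ segment ℝ u v)

/-- `P` is a simplex of dimension `d`: the convex hull of `d+1` affinely independent points. -/
def IsSimplexOfDim {E : Type*} [AddCommGroup E] [Module ℝ E] (P : Set E) (d : ℕ) : Prop :=
  ∃ pts : Fin (d + 1) → E, AffineIndependent ℝ pts ∧ P = convexHull ℝ (Set.range pts)

/-- The standard basis vector indexed by `S`. -/
noncomputable def eVec {V : Type} (S : Finset V) : Finset V → ℝ :=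
  fun T => if T = S then 1 else 0

/-- The pair `(D, E)` is a *turn pair* with respect to `(i, j, Si, Sj)`. -/
def IsTurnPairWrt {V : Type} (D E : DAG V) (i j : V) (Si Sj : Finset V) : Prop :=
  i ∉ Si ∧ j ∉ Si ∧ i ∉ Sj ∧ j ∉ Sj ∧
  D.imset {i, j} = 1 ∧
  (∀ S ⊆ Si, 1 ≤ S.card → D.imset (insert i S) = 1) ∧
  (∀ S ⊆ Sj, 1 ≤ S.card → D.imset (insert j S) = 1) ∧
  ((∃ x ∈ Si, ¬ D.skeleton.Adj j x) ∨ (∃ x ∈ Sj, ¬ D.skeleton.Adj i x)) ∧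
  E.imset = D.imset
      + (∑ T ∈ Si.powerset.filter (fun T : Finset V => ∃ x ∈ T, ¬ D.skeleton.Adj j x),
          eVec (insert i (insert j T)))
      - (∑ T ∈ Sj.powerset.filter (fun T : Finset V => ∃ x ∈ T, ¬ D.skeleton.Adj i x),
          eVec (insert i (insert j T)))

/-- The pair `(D, E)` is a *turn pair*. -/
def IsTurnPair {V : Type} (D E : DAG V) : Prop :=
  ∃ (i j : V) (Si Sj : Finset V), IsTurnPairWrt D E i j Si Sj


namespace TurnAux
variable {V : Type}

lemma adj_irrefl (D : DAG V) (v : V) : ¬ D.adj v v :=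
  fun h => D.acyclic v (Relation.TransGen.single h)

lemma adj_asymm (D : DAG V) {a b : V} (h : D.adj a b) : ¬ D.adj b a :=
  fun h' => D.acyclic a ((Relation.TransGen.single h).tail h')

lemma skelAdj {G : SimpleGraph V} {X : DAG V} (hX : X.skeleton = G) {a b : V}
    (h : X.adj a b) : G.Adj a b := by rw [← hX]; exact Or.inl h

lemma skel_or {G : SimpleGraph V} {X : DAG V} (hX : X.skeleton = G) {a b : V}
    (h : G.Adj a b) : X.adj a b ∨ X.adj b a := by rw [← hX] at h; exact h

lemma no_triangle {G : SimpleGraph V} (hG : G.IsAcyclic) {a b c : V}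
    (hab : G.Adj a b) (hbc : G.Adj b c) (hac : G.Adj a c) : False := by
  apply hG (SimpleGraph.Walk.cons hab (SimpleGraph.Walk.cons hbc
    (SimpleGraph.Walk.cons hac.symm SimpleGraph.Walk.nil)))
  rw [SimpleGraph.Walk.cons_isCycle_iff]
  constructor
  · simp [SimpleGraph.Walk.isPath_def, hbc.ne, hac.ne', hab.ne']
  · simp only [SimpleGraph.Walk.edges_cons, SimpleGraph.Walk.edges_nil, List.mem_cons,
      List.not_mem_nil, or_false]
    push_neg
    constructor
    · intro h
      rw [Sym2.eq_iff] at h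
      rcases h with ⟨h1, h2⟩ | ⟨h1, h2⟩
      · exact hab.ne h1
      · exact hac.ne h1
    · intro h
      rw [Sym2.eq_iff] at h
      rcases h with ⟨h1, h2⟩ | ⟨h1, h2⟩
      · exact hac.ne h1
      · exact hbc.ne' h2.symm

lemma tree_no_alt_path {G : SimpleGraph V} (htree : G.IsTree) {i' j' : V} (hadj : G.Adj i' j') :
    ¬ (G.deleteEdges {s(i', j')}).Reachable j' i' := by
  intro h
  obtain ⟨w⟩ := h
  have hw : ∀ e ∈ (w.toPath : (G.deleteEdges {s(i', j')}).Walk j' i').edges, e ∈ G.edgeSet :=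
    fun e he => SimpleGraph.edgeSet_mono (G.deleteEdges_le _)
      ((w.toPath : (G.deleteEdges {s(i', j')}).Walk j' i').edges_subset_edgeSet he)
  set q := (w.toPath : (G.deleteEdges {s(i', j')}).Walk j' i').transfer G hw with hq_def
  have hq : q.IsPath := SimpleGraph.Walk.IsPath.transfer hw w.toPath.2
  obtain ⟨p₀, -, hup⟩ := htree.existsUnique_path j' i'
  have h1 := hup q hq
  have h2 := hup (SimpleGraph.Walk.cons hadj.symm SimpleGraph.Walk.nil)
    (by simp [SimpleGraph.Walk.isPath_def, hadj.ne'])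
  have hmem : s(j', i') ∈ q.edges := by
    rw [h1, ← h2]; simp
  rw [hq_def, SimpleGraph.Walk.edges_transfer] at hmem
  have := (w.toPath : (G.deleteEdges {s(i', j')}).Walk j' i').edges_subset_edgeSet hmem
  rw [SimpleGraph.edgeSet_deleteEdges] at this
  exact this.2 (by simp [Sym2.eq_swap])

lemma imset_eq_one_iff (D : DAG V) (S : Finset V) :
    D.imset S = 1 ↔ (2 ≤ S.card ∧ ∃ v ∈ S, ∀ u ∈ S, u ≠ v → D.adj u v) := by
  unfold DAG.imset
  split_ifs with h
  · simp [h]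
  · norm_num [h]

lemma imset_zero_or_one (D : DAG V) (S : Finset V) : D.imset S = 0 ∨ D.imset S = 1 := by
  unfold DAG.imset; split_ifs <;> simp

lemma imset_congr (X : DAG V) {S S' : Finset V} (h : ∀ t, t ∈ S ↔ t ∈ S') :
    X.imset S = X.imset S' := by
  have : S = S' := Finset.ext h
  rw [this]

lemma imset_pair [DecidableEq V] {G : SimpleGraph V} {D : DAG V} (hD : D.skeleton = G) {a b : V}
    (h : D.imset {a, b} = 1) : a ≠ b ∧ G.Adj a b := by
  rw [imset_eq_one_iff] at h
  obtain ⟨hcard, c, hc, hall⟩ := h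
  have hne : a ≠ b := by rintro rfl; simp at hcard
  refine ⟨hne, ?_⟩
  rcases Finset.mem_insert.mp hc with rfl | hc
  · exact (skelAdj hD (hall b (by simp) hne.symm)).symm
  · rw [Finset.mem_singleton] at hc; subst hc
    exact skelAdj hD (hall a (by simp) hne)

lemma imset_triple [DecidableEq V] {G : SimpleGraph V} {D : DAG V} (hD : D.skeleton = G)
    (hG : G.IsAcyclic) {v a b : V} (hav : G.Adj a v) (hbv : G.Adj b v) (hab : a ≠ b) :
    D.imset {v, a, b} = 1 ↔ (D.adj a v ∧ D.adj b v) := by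
  have hva : v ≠ a := hav.ne'
  have hvb : v ≠ b := hbv.ne'
  have hcard : ({v, a, b} : Finset V).card = 3 := by
    rw [Finset.card_insert_of_notMem (by simp [hva, hvb]),
      Finset.card_insert_of_notMem (by simp [hab]), Finset.card_singleton]
  rw [imset_eq_one_iff]
  constructor
  · rintro ⟨-, c, hc, hall⟩
    rcases Finset.mem_insert.mp hc with rfl | hc
    · exact ⟨hall a (by simp) hva.symm, hall b (by simp) hvb.symm⟩
    rcases Finset.mem_insert.mp hc with rfl | hc
    · exact absurd (skelAdj hD (hall b (by simp) hab.symm)) (fun h => no_triangle hG h.symm hbv hav)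
    · rw [Finset.mem_singleton] at hc; subst hc
      exact absurd (skelAdj hD (hall a (by simp) hab)) (fun h => no_triangle hG h hbv hav)
  · rintro ⟨h1, h2⟩
    refine ⟨by omega, v, by simp, ?_⟩
    intro u hu hne
    rcases Finset.mem_insert.mp hu with rfl | hu
    · exact absurd rfl hne
    rcases Finset.mem_insert.mp hu with rfl | hu
    · exact h1
    · rw [Finset.mem_singleton] at hu; subst hu; exact h2

lemma markov_of_pairs {G : SimpleGraph V} {X Y : DAG V} (hX : X.skeleton = G)
    (hY : Y.skeleton = G)
    (h : ∀ v a b : V, a ≠ b → ((X.adj a v ∧ X.adj b v) ↔ (Y.adj a v ∧ Y.adj b v))) :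
    MarkovEquiv X Y := by
  refine ⟨hX.trans hY.symm, ?_⟩
  intro a v b
  unfold DAG.IsVStructure
  constructor
  · rintro ⟨hne, h1, h2, h3, h4⟩
    have hp := (h v a b hne).mp ⟨h1, h2⟩
    have hnadj : ¬ G.Adj a b := by
      rw [← hX]; rintro (hh | hh); exacts [h3 hh, h4 hh]
    exact ⟨hne, hp.1, hp.2, fun hh => hnadj (skelAdj hY hh),
      fun hh => hnadj (skelAdj hY hh).symm⟩
  · rintro ⟨hne, h1, h2, h3, h4⟩
    have hp := (h v a b hne).mpr ⟨h1, h2⟩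
    have hnadj : ¬ G.Adj a b := by
      rw [← hY]; rintro (hh | hh); exacts [h3 hh, h4 hh]
    exact ⟨hne, hp.1, hp.2, fun hh => hnadj (skelAdj hX hh),
      fun hh => hnadj (skelAdj hX hh).symm⟩

lemma sum_eVec_eq_zero {s : Finset (Finset V)} {f : Finset V → Finset V} {S : Finset V}
    (h : ∀ T ∈ s, S ≠ f T) : (∑ T ∈ s, eVec (f T)) S = 0 := by
  rw [Finset.sum_apply]
  exact Finset.sum_eq_zero fun T hT => by simp [eVec, h T hT]

lemma sum_eVec_eq_one {s : Finset (Finset V)} {f : Finset V → Finset V} {S T₀ : Finset V}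
    (h₀ : T₀ ∈ s) (hS : S = f T₀) (h : ∀ T ∈ s, S = f T → T = T₀) :
    (∑ T ∈ s, eVec (f T)) S = 1 := by
  rw [Finset.sum_apply]
  rw [Finset.sum_eq_single_of_mem T₀ h₀ (fun T hT hne => by
    simp only [eVec]
    rw [if_neg (fun h' => hne (h T hT h'))])]
  simp [eVec, hS]

lemma diff_eval {D E : DAG V} {i j : V} {Si Sj : Finset V}
    (h9 : E.imset = D.imset
      + (∑ T ∈ Si.powerset.filter (fun T : Finset V => ∃ x ∈ T, ¬D.skeleton.Adj j x),
          eVec (insert i (insert j T)))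
      - (∑ T ∈ Sj.powerset.filter (fun T : Finset V => ∃ x ∈ T, ¬D.skeleton.Adj i x),
          eVec (insert i (insert j T))))
    (S : Finset V) (hS : i ∉ S ∨ j ∉ S) : E.imset S = D.imset S := by
  have h := congrFun h9 S
  rw [Pi.sub_apply, Pi.add_apply] at h
  have hz : ∀ T : Finset V, S ≠ insert i (insert j T) := by
    intro T hST
    rcases hS with hS | hS
    · exact hS (by rw [hST]; simp)
    · exact hS (by rw [hST]; simp)
  rw [sum_eVec_eq_zero (fun T _ => hz T), sum_eVec_eq_zero (fun T _ => hz T)] at h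
  simpa using h

lemma key_eval {D E : DAG V} {i j : V} {Si Sj : Finset V}
    (hiSi : i ∉ Si) (hjSi : j ∉ Si) (hiSj : i ∉ Sj) (hjSj : j ∉ Sj)
    (hfSi : ∀ x ∈ Si, ¬D.skeleton.Adj j x) (hfSj : ∀ y ∈ Sj, ¬D.skeleton.Adj i y)
    (h9 : E.imset = D.imset
      + (∑ T ∈ Si.powerset.filter (fun T : Finset V => ∃ x ∈ T, ¬D.skeleton.Adj j x),
          eVec (insert i (insert j T)))
      - (∑ T ∈ Sj.powerset.filter (fun T : Finset V => ∃ x ∈ T, ¬D.skeleton.Adj i x),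
          eVec (insert i (insert j T))))
    (S : Finset V) (w : V) (hwi : w ≠ i) (hwj : w ≠ j)
    (hSmem : ∀ t, t ∈ S ↔ (t = i ∨ t = j ∨ t = w)) :
    (w ∈ Si → w ∉ Sj → E.imset S = D.imset S + 1) ∧
    (w ∉ Si → w ∈ Sj → E.imset S = D.imset S - 1) ∧
    (w ∉ Si → w ∉ Sj → E.imset S = D.imset S) := by
  have hiff : ∀ T Z : Finset V, T ⊆ Z → i ∉ Z → j ∉ Z →
      (S = insert i (insert j T) ↔ T = {w}) := by
    intro T Z hTZ hiZ hjZ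
    constructor
    · intro h'
      ext t
      simp only [Finset.mem_singleton]
      constructor
      · intro ht
        have htS : t ∈ S := by
          rw [h']; exact Finset.mem_insert_of_mem (Finset.mem_insert_of_mem ht)
        rcases (hSmem t).mp htS with rfl | rfl | rfl
        · exact absurd (hTZ ht) hiZ
        · exact absurd (hTZ ht) hjZ
        · rfl
      · intro ht
        have hwS : t ∈ S := (hSmem t).mpr (Or.inr (Or.inr ht))
        rw [h'] at hwS
        rcases Finset.mem_insert.mp hwS with h'' | hwS
        · exact absurd ((h''.symm.trans ht).symm) hwi
        rcases Finset.mem_insert.mp hwS with h'' | hwS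
        · exact absurd ((h''.symm.trans ht).symm) hwj
        · exact hwS
    · rintro rfl
      ext t
      rw [hSmem t]
      simp [Finset.mem_insert]
  have h := congrFun h9 S
  rw [Pi.sub_apply, Pi.add_apply] at h
  have hplus_mem : w ∈ Si →
      (∑ T ∈ Si.powerset.filter (fun T : Finset V => ∃ x ∈ T, ¬D.skeleton.Adj j x),
        eVec (insert i (insert j T))) S = 1 := by
    intro hw
    refine sum_eVec_eq_one (T₀ := {w}) ?_ ?_ ?_
    · rw [Finset.mem_filter, Finset.mem_powerset]
      exact ⟨Finset.singleton_subset_iff.mpr hw, w, Finset.mem_singleton_self w, hfSi w hw⟩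
    · exact (hiff {w} Si (Finset.singleton_subset_iff.mpr hw) hiSi hjSi).mpr rfl
    · intro T hT hST
      rw [Finset.mem_filter, Finset.mem_powerset] at hT
      exact (hiff T Si hT.1 hiSi hjSi).mp hST
  have hplus_nmem : w ∉ Si →
      (∑ T ∈ Si.powerset.filter (fun T : Finset V => ∃ x ∈ T, ¬D.skeleton.Adj j x),
        eVec (insert i (insert j T))) S = 0 := by
    intro hw
    apply sum_eVec_eq_zero
    intro T hT hST
    rw [Finset.mem_filter, Finset.mem_powerset] at hT
    have hTw := (hiff T Si hT.1 hiSi hjSi).mp hST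
    exact hw (Finset.singleton_subset_iff.mp (hTw ▸ hT.1))
  have hminus_mem : w ∈ Sj →
      (∑ T ∈ Sj.powerset.filter (fun T : Finset V => ∃ x ∈ T, ¬D.skeleton.Adj i x),
        eVec (insert i (insert j T))) S = 1 := by
    intro hw
    refine sum_eVec_eq_one (T₀ := {w}) ?_ ?_ ?_
    · rw [Finset.mem_filter, Finset.mem_powerset]
      exact ⟨Finset.singleton_subset_iff.mpr hw, w, Finset.mem_singleton_self w, hfSj w hw⟩
    · exact (hiff {w} Sj (Finset.singleton_subset_iff.mpr hw) hiSj hjSj).mpr rfl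
    · intro T hT hST
      rw [Finset.mem_filter, Finset.mem_powerset] at hT
      exact (hiff T Sj hT.1 hiSj hjSj).mp hST
  have hminus_nmem : w ∉ Sj →
      (∑ T ∈ Sj.powerset.filter (fun T : Finset V => ∃ x ∈ T, ¬D.skeleton.Adj i x),
        eVec (insert i (insert j T))) S = 0 := by
    intro hw
    apply sum_eVec_eq_zero
    intro T hT hST
    rw [Finset.mem_filter, Finset.mem_powerset] at hT
    have hTw := (hiff T Sj hT.1 hiSj hjSj).mp hST
    exact hw (Finset.singleton_subset_iff.mp (hTw ▸ hT.1))
  refine ⟨fun h1 h2 => ?_, fun h1 h2 => ?_, fun h1 h2 => ?_⟩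
  · rw [hplus_mem h1, hminus_nmem h2] at h; linarith
  · rw [hplus_nmem h1, hminus_mem h2] at h; linarith
  · rw [hplus_nmem h1, hminus_nmem h2] at h; linarith


lemma main_construct {V : Type} {G : SimpleGraph V} (htree : G.IsTree)
    (D E : DAG V) (hD : D.skeleton = G) (hE : E.skeleton = G)
    {i' j' : V} (hadj : G.Adj i' j')
    (hO1 : ∀ b, D.adj b j' → b ≠ i' → D.adj i' j')
    (hO2 : ∀ b, E.adj b i' → b ≠ j' → E.adj j' i')
    (hbeta : ¬ D.adj j' i')
    (hdelta : ¬ E.adj i' j')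
    (halpha : ∀ a b, a ≠ j' → b ≠ j' → a ≠ b →
      ((D.adj a i' ∧ D.adj b i') ↔ (E.adj a i' ∧ E.adj b i')))
    (hgamma : ∀ a b, a ≠ i' → b ≠ i' → a ≠ b →
      ((E.adj a j' ∧ E.adj b j') ↔ (D.adj a j' ∧ D.adj b j')))
    (hH : ∀ v, v ≠ i' → v ≠ j' → ∀ a b, a ≠ b →
      ((D.adj a v ∧ D.adj b v) ↔ (E.adj a v ∧ E.adj b v))) :
    ∃ (𝒟 : DAG V) (i'' j'' : V), MarkovEquiv D 𝒟 ∧ 𝒟.adj i'' j'' ∧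
      ∃ R : DAG V,
        (∀ a b, R.adj a b ↔ ((a = j'' ∧ b = i'') ∨ (𝒟.adj a b ∧ ¬ (a = i'' ∧ b = j'')))) ∧
        MarkovEquiv E R := by
  classical
  have hne : i' ≠ j' := hadj.ne
  set side : V → Prop := fun v => (G.deleteEdges {s(i', j')}).Reachable v i' with hside_def
  have hside_i' : side i' := SimpleGraph.Reachable.refl i'
  have hside_j' : ¬ side j' := tree_no_alt_path htree hadj
  have hstep : ∀ {a b : V}, G.Adj a b → ¬ (a = i' ∧ b = j') → ¬ (a = j' ∧ b = i') →
      (side a ↔ side b) := by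
    intro a b hab h1 h2
    have hadj' : (G.deleteEdges {s(i', j')}).Adj a b := by
      rw [SimpleGraph.deleteEdges_adj]
      refine ⟨hab, ?_⟩
      simp only [Set.mem_singleton_iff, Sym2.eq_iff]
      rintro (⟨rfl, rfl⟩ | ⟨rfl, rfl⟩)
      · exact h1 ⟨rfl, rfl⟩
      · exact h2 ⟨rfl, rfl⟩
    exact ⟨fun h => hadj'.symm.reachable.trans h, fun h => hadj'.reachable.trans h⟩
  -- the two adjacency relations
  set dadj : V → V → Prop := fun a b =>
    (a = i' ∧ b = j') ∨ (side a ∧ side b ∧ E.adj a b) ∨ (¬ side a ∧ ¬ side b ∧ D.adj a b)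
    with hdadj_def
  set radj : V → V → Prop := fun a b =>
    (a = j' ∧ b = i') ∨ (side a ∧ side b ∧ E.adj a b) ∨ (¬ side a ∧ ¬ side b ∧ D.adj a b)
    with hradj_def
  have hdacyc : ∀ v, ¬ Relation.TransGen dadj v v := by
    have invar : ∀ v w, Relation.TransGen dadj v w →
        (side v ∧ side w ∧ Relation.TransGen E.adj v w) ∨
        (¬ side v ∧ ¬ side w ∧ Relation.TransGen D.adj v w) ∨
        (side v ∧ ¬ side w) := by
      intro v w h
      induction h with
      | single h =>
        rcases h with ⟨rfl, rfl⟩ | ⟨h1, h2, h3⟩ | ⟨h1, h2, h3⟩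
        · exact Or.inr (Or.inr ⟨hside_i', hside_j'⟩)
        · exact Or.inl ⟨h1, h2, Relation.TransGen.single h3⟩
        · exact Or.inr (Or.inl ⟨h1, h2, Relation.TransGen.single h3⟩)
      | tail hvb hbc ih =>
        rename_i b c
        rcases hbc with ⟨rfl, rfl⟩ | ⟨h1, h2, h3⟩ | ⟨h1, h2, h3⟩
        · rcases ih with ⟨hv, hb, -⟩ | ⟨hv, hb, -⟩ | ⟨hv, hb⟩
          · exact Or.inr (Or.inr ⟨hv, hside_j'⟩)
          · exact absurd hside_i' hb
          · exact absurd hside_i' hb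
        · rcases ih with ⟨hv, hb, ht⟩ | ⟨hv, hb, ht⟩ | ⟨hv, hb⟩
          · exact Or.inl ⟨hv, h2, ht.tail h3⟩
          · exact absurd h1 hb
          · exact absurd h1 hb
        · rcases ih with ⟨hv, hb, ht⟩ | ⟨hv, hb, ht⟩ | ⟨hv, hb⟩
          · exact absurd hb h1
          · exact Or.inr (Or.inl ⟨hv, h2, ht.tail h3⟩)
          · exact Or.inr (Or.inr ⟨hv, h2⟩)
    intro v hv
    rcases invar v v hv with ⟨-, -, h⟩ | ⟨-, -, h⟩ | ⟨h1, h2⟩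
    · exact E.acyclic v h
    · exact D.acyclic v h
    · exact h2 h1
  have hracyc : ∀ v, ¬ Relation.TransGen radj v v := by
    have invar : ∀ v w, Relation.TransGen radj v w →
        (side v ∧ side w ∧ Relation.TransGen E.adj v w) ∨
        (¬ side v ∧ ¬ side w ∧ Relation.TransGen D.adj v w) ∨
        (¬ side v ∧ side w) := by
      intro v w h
      induction h with
      | single h =>
        rcases h with ⟨rfl, rfl⟩ | ⟨h1, h2, h3⟩ | ⟨h1, h2, h3⟩
        · exact Or.inr (Or.inr ⟨hside_j', hside_i'⟩)
        · exact Or.inl ⟨h1, h2, Relation.TransGen.single h3⟩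
        · exact Or.inr (Or.inl ⟨h1, h2, Relation.TransGen.single h3⟩)
      | tail hvb hbc ih =>
        rename_i b c
        rcases hbc with ⟨rfl, rfl⟩ | ⟨h1, h2, h3⟩ | ⟨h1, h2, h3⟩
        · rcases ih with ⟨hv, hb, -⟩ | ⟨hv, hb, -⟩ | ⟨hv, hb⟩
          · exact absurd hb hside_j'
          · exact Or.inr (Or.inr ⟨hv, hside_i'⟩)
          · exact absurd hb hside_j'
        · rcases ih with ⟨hv, hb, ht⟩ | ⟨hv, hb, ht⟩ | ⟨hv, hb⟩
          · exact Or.inl ⟨hv, h2, ht.tail h3⟩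
          · exact absurd h1 hb
          · exact Or.inr (Or.inr ⟨hv, h2⟩)
        · rcases ih with ⟨hv, hb, ht⟩ | ⟨hv, hb, ht⟩ | ⟨hv, hb⟩
          · exact absurd hb h1
          · exact Or.inr (Or.inl ⟨hv, h2, ht.tail h3⟩)
          · exact absurd hb h1
    intro v hv
    rcases invar v v hv with ⟨-, -, h⟩ | ⟨-, -, h⟩ | ⟨h1, h2⟩
    · exact E.acyclic v h
    · exact D.acyclic v h
    · exact h1 h2
  set 𝒟 : DAG V := ⟨dadj, hdacyc⟩ with h𝒟_def
  set R : DAG V := ⟨radj, hracyc⟩ with hR_def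
  -- skeletons
  have hGside : ∀ {a b : V}, G.Adj a b → side a → ¬ side b → a = i' ∧ b = j' := by
    intro a b hab hsa hsb
    by_contra hcon
    have h2 : ¬ (a = j' ∧ b = i') := by rintro ⟨rfl, rfl⟩; exact hside_j' hsa
    exact hsb ((hstep hab hcon h2).mp hsa)
  have h𝒟skel : 𝒟.skeleton = G := by
    ext a b
    show dadj a b ∨ dadj b a ↔ G.Adj a b
    constructor
    · rintro ((⟨rfl, rfl⟩ | ⟨-, -, h⟩ | ⟨-, -, h⟩) | (⟨rfl, rfl⟩ | ⟨-, -, h⟩ | ⟨-, -, h⟩))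
      exacts [hadj, skelAdj hE h, skelAdj hD h, hadj.symm, (skelAdj hE h).symm,
        (skelAdj hD h).symm]
    · intro hab
      by_cases hsa : side a <;> by_cases hsb : side b
      · rcases skel_or hE hab with h | h
        · exact Or.inl (Or.inr (Or.inl ⟨hsa, hsb, h⟩))
        · exact Or.inr (Or.inr (Or.inl ⟨hsb, hsa, h⟩))
      · obtain ⟨rfl, rfl⟩ := hGside hab hsa hsb
        exact Or.inl (Or.inl ⟨rfl, rfl⟩)
      · obtain ⟨rfl, rfl⟩ := hGside hab.symm hsb hsa
        exact Or.inr (Or.inl ⟨rfl, rfl⟩)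
      · rcases skel_or hD hab with h | h
        · exact Or.inl (Or.inr (Or.inr ⟨hsa, hsb, h⟩))
        · exact Or.inr (Or.inr (Or.inr ⟨hsb, hsa, h⟩))
  have hRskel : R.skeleton = G := by
    ext a b
    show radj a b ∨ radj b a ↔ G.Adj a b
    constructor
    · rintro ((⟨rfl, rfl⟩ | ⟨-, -, h⟩ | ⟨-, -, h⟩) | (⟨rfl, rfl⟩ | ⟨-, -, h⟩ | ⟨-, -, h⟩))
      exacts [hadj.symm, skelAdj hE h, skelAdj hD h, hadj, (skelAdj hE h).symm,
        (skelAdj hD h).symm]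
    · intro hab
      by_cases hsa : side a <;> by_cases hsb : side b
      · rcases skel_or hE hab with h | h
        · exact Or.inl (Or.inr (Or.inl ⟨hsa, hsb, h⟩))
        · exact Or.inr (Or.inr (Or.inl ⟨hsb, hsa, h⟩))
      · obtain ⟨rfl, rfl⟩ := hGside hab hsa hsb
        exact Or.inr (Or.inl ⟨rfl, rfl⟩)
      · obtain ⟨rfl, rfl⟩ := hGside hab.symm hsb hsa
        exact Or.inl (Or.inl ⟨rfl, rfl⟩)
      · rcases skel_or hD hab with h | h
        · exact Or.inl (Or.inr (Or.inr ⟨hsa, hsb, h⟩))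
        · exact Or.inr (Or.inr (Or.inr ⟨hsb, hsa, h⟩))
  -- parent characterizations
  have hside_of_Eadj : ∀ {c : V}, E.adj c i' → c ≠ j' → side c := by
    intro c h hcj
    have hGc : G.Adj c i' := skelAdj hE h
    exact (hstep hGc (by rintro ⟨rfl, rfl⟩; exact hne rfl)
      (by rintro ⟨rfl, -⟩; exact hcj rfl)).mpr hside_i'
  have hnside_of_Dadj : ∀ {c : V}, D.adj c j' → c ≠ i' → ¬ side c := by
    intro c h hci
    have hGc : G.Adj c j' := skelAdj hD h
    intro hsc
    obtain ⟨rfl, -⟩ := hGside hGc hsc hside_j'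
    exact hci rfl
  have h𝒟i' : ∀ c, dadj c i' ↔ (E.adj c i' ∧ c ≠ j') := by
    intro c
    constructor
    · rintro (⟨rfl, h⟩ | ⟨h1, h2, h3⟩ | ⟨h1, h2, h3⟩)
      · exact absurd h hne
      · exact ⟨h3, fun hc => hside_j' (hc ▸ h1)⟩
      · exact absurd hside_i' h2
    · rintro ⟨hc, hcj⟩
      exact Or.inr (Or.inl ⟨hside_of_Eadj hc hcj, hside_i', hc⟩)
  have h𝒟j' : ∀ c, dadj c j' ↔ (c = i' ∨ (D.adj c j' ∧ c ≠ i')) := by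
    intro c
    constructor
    · rintro (⟨rfl, -⟩ | ⟨h1, h2, h3⟩ | ⟨h1, h2, h3⟩)
      · exact Or.inl rfl
      · exact absurd h2 hside_j'
      · exact Or.inr ⟨h3, fun hc => h1 (hc ▸ hside_i')⟩
    · rintro (rfl | ⟨hc, hci⟩)
      · exact Or.inl ⟨rfl, rfl⟩
      · exact Or.inr (Or.inr ⟨hnside_of_Dadj hc hci, hside_j', hc⟩)
  have h𝒟T : ∀ v, v ≠ i' → side v → ∀ c, (dadj c v ↔ E.adj c v) := by
    intro v hvi hsv c
    have hvj : v ≠ j' := fun h => hside_j' (h ▸ hsv)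
    constructor
    · rintro (⟨rfl, rfl⟩ | ⟨h1, h2, h3⟩ | ⟨h1, h2, h3⟩)
      · exact absurd rfl hvj
      · exact h3
      · exact absurd hsv h2
    · intro h
      have hGc : G.Adj c v := skelAdj hE h
      have hsc : side c := (hstep hGc (by rintro ⟨rfl, rfl⟩; exact hvj rfl)
        (by rintro ⟨rfl, rfl⟩; exact hvi rfl)).mpr hsv
      exact Or.inr (Or.inl ⟨hsc, hsv, h⟩)
  have h𝒟F : ∀ v, v ≠ j' → ¬ side v → ∀ c, (dadj c v ↔ D.adj c v) := by
    intro v hvj hsv c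
    have hvi : v ≠ i' := fun h => hsv (h ▸ hside_i')
    constructor
    · rintro (⟨rfl, rfl⟩ | ⟨h1, h2, h3⟩ | ⟨h1, h2, h3⟩)
      · exact absurd rfl hvj
      · exact absurd h2 hsv
      · exact h3
    · intro h
      have hGc : G.Adj c v := skelAdj hD h
      have hsc : ¬ side c := by
        intro hsc
        obtain ⟨-, hh⟩ := hGside hGc hsc hsv
        exact hvj hh
      exact Or.inr (Or.inr ⟨hsc, hsv, h⟩)
  have hRi' : ∀ c, radj c i' ↔ (c = j' ∨ (E.adj c i' ∧ c ≠ j')) := by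
    intro c
    constructor
    · rintro (⟨rfl, -⟩ | ⟨h1, h2, h3⟩ | ⟨h1, h2, h3⟩)
      · exact Or.inl rfl
      · exact Or.inr ⟨h3, fun hc => hside_j' (hc ▸ h1)⟩
      · exact absurd hside_i' h2
    · rintro (rfl | ⟨hc, hcj⟩)
      · exact Or.inl ⟨rfl, rfl⟩
      · exact Or.inr (Or.inl ⟨hside_of_Eadj hc hcj, hside_i', hc⟩)
  have hRj' : ∀ c, radj c j' ↔ (D.adj c j' ∧ c ≠ i') := by
    intro c
    constructor
    · rintro (⟨rfl, h⟩ | ⟨h1, h2, h3⟩ | ⟨h1, h2, h3⟩)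
      · exact absurd h hne.symm
      · exact absurd h2 hside_j'
      · exact ⟨h3, fun hc => h1 (hc ▸ hside_i')⟩
    · rintro ⟨hc, hci⟩
      exact Or.inr (Or.inr ⟨hnside_of_Dadj hc hci, hside_j', hc⟩)
  have hRT : ∀ v, v ≠ i' → side v → ∀ c, (radj c v ↔ E.adj c v) := by
    intro v hvi hsv c
    have hvj : v ≠ j' := fun h => hside_j' (h ▸ hsv)
    constructor
    · rintro (⟨rfl, rfl⟩ | ⟨h1, h2, h3⟩ | ⟨h1, h2, h3⟩)
      · exact absurd rfl hvi
      · exact h3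
      · exact absurd hsv h2
    · intro h
      have hGc : G.Adj c v := skelAdj hE h
      have hsc : side c := (hstep hGc (by rintro ⟨rfl, rfl⟩; exact hvj rfl)
        (by rintro ⟨rfl, rfl⟩; exact hvi rfl)).mpr hsv
      exact Or.inr (Or.inl ⟨hsc, hsv, h⟩)
  have hRF : ∀ v, v ≠ j' → ¬ side v → ∀ c, (radj c v ↔ D.adj c v) := by
    intro v hvj hsv c
    have hvi : v ≠ i' := fun h => hsv (h ▸ hside_i')
    constructor
    · rintro (⟨rfl, rfl⟩ | ⟨h1, h2, h3⟩ | ⟨h1, h2, h3⟩)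
      · exact absurd rfl hvi
      · exact absurd h2 hsv
      · exact h3
    · intro h
      have hGc : G.Adj c v := skelAdj hD h
      have hsc : ¬ side c := by
        intro hsc
        obtain ⟨-, hh⟩ := hGside hGc hsc hsv
        exact hvj hh
      exact Or.inr (Or.inr ⟨hsc, hsv, h⟩)
  -- Markov equivalence D ≡ 𝒟
  have hMeqD : MarkovEquiv D 𝒟 := by
    apply markov_of_pairs hD h𝒟skel
    intro v a b hab
    show (D.adj a v ∧ D.adj b v) ↔ (dadj a v ∧ dadj b v)
    by_cases hvi : v = i'
    · subst hvi
      rw [h𝒟i' a, h𝒟i' b]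
      constructor
      · rintro ⟨ha, hb⟩
        have haj : a ≠ j' := fun h => hbeta (h ▸ ha)
        have hbj : b ≠ j' := fun h => hbeta (h ▸ hb)
        obtain ⟨ha', hb'⟩ := (halpha a b haj hbj hab).mp ⟨ha, hb⟩
        exact ⟨⟨ha', haj⟩, ⟨hb', hbj⟩⟩
      · rintro ⟨⟨ha, haj⟩, ⟨hb, hbj⟩⟩
        exact (halpha a b haj hbj hab).mpr ⟨ha, hb⟩
    by_cases hvj : v = j'
    · subst hvj
      rw [h𝒟j' a, h𝒟j' b]
      constructor
      · rintro ⟨ha, hb⟩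
        constructor
        · by_cases h : a = i'
          · exact Or.inl h
          · exact Or.inr ⟨ha, h⟩
        · by_cases h : b = i'
          · exact Or.inl h
          · exact Or.inr ⟨hb, h⟩
      · rintro ⟨(rfl | ⟨ha, hai⟩), (rfl | ⟨hb, hbi⟩)⟩
        · exact absurd rfl hab
        · exact ⟨hO1 b hb hbi, hb⟩
        · exact ⟨ha, hO1 a ha hai⟩
        · exact ⟨ha, hb⟩
    by_cases hsv : side v
    · rw [h𝒟T v hvi hsv a, h𝒟T v hvi hsv b]
      exact hH v hvi hvj a b hab
    · rw [h𝒟F v hvj hsv a, h𝒟F v hvj hsv b]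
  -- Markov equivalence E ≡ R
  have hMeqE : MarkovEquiv E R := by
    apply markov_of_pairs hE hRskel
    intro v a b hab
    show (E.adj a v ∧ E.adj b v) ↔ (radj a v ∧ radj b v)
    by_cases hvi : v = i'
    · subst hvi
      rw [hRi' a, hRi' b]
      constructor
      · rintro ⟨ha, hb⟩
        constructor
        · by_cases h : a = j'
          · exact Or.inl h
          · exact Or.inr ⟨ha, h⟩
        · by_cases h : b = j'
          · exact Or.inl h
          · exact Or.inr ⟨hb, h⟩
      · rintro ⟨(rfl | ⟨ha, haj⟩), (rfl | ⟨hb, hbj⟩)⟩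
        · exact absurd rfl hab
        · exact ⟨hO2 b hb hbj, hb⟩
        · exact ⟨ha, hO2 a ha haj⟩
        · exact ⟨ha, hb⟩
    by_cases hvj : v = j'
    · subst hvj
      rw [hRj' a, hRj' b]
      constructor
      · rintro ⟨ha, hb⟩
        have hai : a ≠ i' := fun h => hdelta (h ▸ ha)
        have hbi : b ≠ i' := fun h => hdelta (h ▸ hb)
        obtain ⟨ha', hb'⟩ := (hgamma a b hai hbi hab).mp ⟨ha, hb⟩
        exact ⟨⟨ha', hai⟩, ⟨hb', hbi⟩⟩
      · rintro ⟨⟨ha, hai⟩, ⟨hb, hbi⟩⟩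
        exact (hgamma a b hai hbi hab).mpr ⟨ha, hb⟩
    by_cases hsv : side v
    · rw [hRT v hvi hsv a, hRT v hvi hsv b]
    · rw [hRF v hvj hsv a, hRF v hvj hsv b]
      exact (hH v hvi hvj a b hab).symm
  refine ⟨𝒟, i', j', hMeqD, Or.inl ⟨rfl, rfl⟩, R, ?_, hMeqE⟩
  intro a b
  show radj a b ↔ (a = j' ∧ b = i') ∨ (dadj a b ∧ ¬ (a = i' ∧ b = j'))
  constructor
  · rintro (⟨rfl, rfl⟩ | ⟨h1, h2, h3⟩ | ⟨h1, h2, h3⟩)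
    · exact Or.inl ⟨rfl, rfl⟩
    · exact Or.inr ⟨Or.inr (Or.inl ⟨h1, h2, h3⟩), by rintro ⟨rfl, rfl⟩; exact hside_j' h2⟩
    · exact Or.inr ⟨Or.inr (Or.inr ⟨h1, h2, h3⟩), by rintro ⟨rfl, rfl⟩; exact h1 hside_i'⟩
  · rintro (⟨rfl, rfl⟩ | ⟨(⟨rfl, rfl⟩ | h | h), hnot⟩)
    · exact Or.inl ⟨rfl, rfl⟩
    · exact absurd ⟨rfl, rfl⟩ hnot
    · exact Or.inr (Or.inl h)
    · exact Or.inr (Or.inr h)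

end TurnAux

/-- **Turn pairs on trees are edge reversals.**  Assume `{D, E}` is a turn pair of DAGs
with common tree skeleton.  Then there are a DAG `𝒟` and nodes `i'`, `j'` such that `D`
and `𝒟` are Markov equivalent, `i' → j'` is an arrow of `𝒟`, the graph obtained from `𝒟`
by reversing `i' → j'` is a DAG, and it is Markov equivalent to `E`. -/
theorem turn_pair_is_edge_reversal {p : ℕ} (G : SimpleGraph (Fin p)) (htree : G.IsTree)
    (D E : DAG (Fin p)) (hD : D.skeleton = G) (hE : E.skeleton = G)
    (hturn : IsTurnPair D E) :
    ∃ (𝒟 : DAG (Fin p)) (i' j' : Fin p),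
      MarkovEquiv D 𝒟 ∧ 𝒟.adj i' j' ∧
      ∃ R : DAG (Fin p),
        (∀ a b, R.adj a b ↔ ((a = j' ∧ b = i') ∨ (𝒟.adj a b ∧ ¬ (a = i' ∧ b = j')))) ∧
        MarkovEquiv E R := by
  classical
  obtain ⟨i, j, Si, Sj, hiSi, hjSi, hiSj, hjSj, h5, h6, h7, h8, h9⟩ := hturn
  have hGacyc : G.IsAcyclic := htree.IsAcyclic
  obtain ⟨hij_ne, hGij⟩ := TurnAux.imset_pair hD
    (show D.imset {i, j} = 1 by
      refine Eq.trans ?_ h5; exact TurnAux.imset_congr D fun t => by simp)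
  have hSi_adj : ∀ x ∈ Si, G.Adj i x := fun x hx =>
    (TurnAux.imset_pair hD (show D.imset {i, x} = 1 by
      refine Eq.trans ?_ (h6 {x} (Finset.singleton_subset_iff.mpr hx) (by simp))
      exact TurnAux.imset_congr D fun t => by simp)).2
  have hSj_adj : ∀ y ∈ Sj, G.Adj j y := fun y hy =>
    (TurnAux.imset_pair hD (show D.imset {j, y} = 1 by
      refine Eq.trans ?_ (h7 {y} (Finset.singleton_subset_iff.mpr hy) (by simp))
      exact TurnAux.imset_congr D fun t => by simp)).2
  have hSi_ni : ∀ x ∈ Si, x ≠ i := fun x hx h => hiSi (h ▸ hx)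
  have hSi_nj : ∀ x ∈ Si, x ≠ j := fun x hx h => hjSi (h ▸ hx)
  have hSj_ni : ∀ y ∈ Sj, y ≠ i := fun y hy h => hiSj (h ▸ hy)
  have hSj_nj : ∀ y ∈ Sj, y ≠ j := fun y hy h => hjSj (h ▸ hy)
  have hSi_nadj : ∀ x ∈ Si, ¬ G.Adj j x := fun x hx h =>
    TurnAux.no_triangle hGacyc hGij h (hSi_adj x hx)
  have hSj_nadj : ∀ y ∈ Sj, ¬ G.Adj i y := fun y hy h =>
    TurnAux.no_triangle hGacyc hGij.symm h (hSj_adj y hy)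
  have hSiSj : ∀ x ∈ Si, x ∉ Sj := fun x hx hx' => hSj_nadj x hx' (hSi_adj x hx)
  have hSjSi : ∀ y ∈ Sj, y ∉ Si := fun y hy hy' => hSiSj y hy' hy
  have hkey : ∀ w : Fin p, w ≠ i → w ≠ j →
      (w ∈ Si → w ∉ Sj → E.imset {i, j, w} = D.imset {i, j, w} + 1) ∧
      (w ∉ Si → w ∈ Sj → E.imset {i, j, w} = D.imset {i, j, w} - 1) ∧
      (w ∉ Si → w ∉ Sj → E.imset {i, j, w} = D.imset {i, j, w}) :=
    fun w hwi hwj => TurnAux.key_eval hiSi hjSi hiSj hjSj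
      (fun x hx => by rw [hD]; exact hSi_nadj x hx)
      (fun y hy => by rw [hD]; exact hSj_nadj y hy)
      h9 {i, j, w} w hwi hwj (fun t => by simp)
  have hdiff : ∀ S : Finset (Fin p), i ∉ S ∨ j ∉ S → E.imset S = D.imset S :=
    fun S hS => TurnAux.diff_eval h9 S hS
  have hPxDE : ∀ x ∈ Si, D.imset {i, j, x} = 0 ∧ E.imset {i, j, x} = 1 := by
    intro x hx
    have hk := (hkey x (hSi_ni x hx) (hSi_nj x hx)).1 hx (hSiSj x hx)
    rcases TurnAux.imset_zero_or_one D {i, j, x} with h0 | h0 <;>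
      rcases TurnAux.imset_zero_or_one E {i, j, x} with h1 | h1 <;>
        rw [h0, h1] at hk <;> first | exact ⟨h0, h1⟩ | linarith
  have hPyDE : ∀ y ∈ Sj, D.imset {i, j, y} = 1 ∧ E.imset {i, j, y} = 0 := by
    intro y hy
    have hk := (hkey y (hSj_ni y hy) (hSj_nj y hy)).2.1 (hSjSi y hy) hy
    rcases TurnAux.imset_zero_or_one D {i, j, y} with h0 | h0 <;>
      rcases TurnAux.imset_zero_or_one E {i, j, y} with h1 | h1 <;>
        rw [h0, h1] at hk <;> first | exact ⟨h0, h1⟩ | linarith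
  have hPxE : ∀ x ∈ Si, E.adj j i ∧ E.adj x i := by
    intro x hx
    have h1 := (hPxDE x hx).2
    rwa [TurnAux.imset_triple hE hGacyc hGij.symm (hSi_adj x hx).symm
      (Ne.symm (hSi_nj x hx))] at h1
  have hPxD : ∀ x ∈ Si, ¬ (D.adj j i ∧ D.adj x i) := by
    intro x hx h
    have h1 := (hPxDE x hx).1
    have h2 := (TurnAux.imset_triple hD hGacyc hGij.symm (hSi_adj x hx).symm
      (Ne.symm (hSi_nj x hx))).mpr h
    rw [h1] at h2
    norm_num at h2
  have hswap : ∀ a b w : Fin p, ({a, b, w} : Finset (Fin p)) = {b, a, w} := fun a b w =>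
    Finset.insert_comm a b {w}
  have hPyD : ∀ y ∈ Sj, D.adj i j ∧ D.adj y j := by
    intro y hy
    have h1 := (hPyDE y hy).1
    rw [hswap i j y] at h1
    rwa [TurnAux.imset_triple hD hGacyc hGij (hSj_adj y hy).symm
      (Ne.symm (hSj_ni y hy))] at h1
  have hPyE : ∀ y ∈ Sj, ¬ (E.adj i j ∧ E.adj y j) := by
    intro y hy h
    have h1 := (hPyDE y hy).2
    rw [hswap i j y] at h1
    have h2 := (TurnAux.imset_triple hE hGacyc hGij (hSj_adj y hy).symm
      (Ne.symm (hSj_ni y hy))).mpr h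
    rw [h1] at h2
    norm_num at h2
  have pair_iff' : ∀ v a b : Fin p, a ≠ b → E.imset {v, a, b} = D.imset {v, a, b} →
      ((D.adj a v ∧ D.adj b v) ↔ (E.adj a v ∧ E.adj b v)) := by
    intro v a b hab heq
    by_cases hGa : G.Adj a v
    · by_cases hGb : G.Adj b v
      · rw [← TurnAux.imset_triple hD hGacyc hGa hGb hab,
          ← TurnAux.imset_triple hE hGacyc hGa hGb hab, heq]
      · exact iff_of_false (fun h => hGb (TurnAux.skelAdj hD h.2))
          (fun h => hGb (TurnAux.skelAdj hE h.2))
    · exact iff_of_false (fun h => hGa (TurnAux.skelAdj hD h.1))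
        (fun h => hGa (TurnAux.skelAdj hE h.1))
  have hP1 : ∀ v, v ≠ i → v ≠ j → ∀ a b : Fin p, a ≠ b →
      ((D.adj a v ∧ D.adj b v) ↔ (E.adj a v ∧ E.adj b v)) := by
    intro v hvi hvj a b hab
    by_cases hx : (a = i ∧ b = j) ∨ (a = j ∧ b = i)
    · rcases hx with ⟨rfl, rfl⟩ | ⟨rfl, rfl⟩
      · by_cases hGa : G.Adj a v
        · by_cases hGb : G.Adj b v
          · exact (TurnAux.no_triangle hGacyc hGij hGb hGa).elim
          · exact iff_of_false (fun h => hGb (TurnAux.skelAdj hD h.2))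
              (fun h => hGb (TurnAux.skelAdj hE h.2))
        · exact iff_of_false (fun h => hGa (TurnAux.skelAdj hD h.1))
            (fun h => hGa (TurnAux.skelAdj hE h.1))
      · by_cases hGa : G.Adj a v
        · by_cases hGb : G.Adj b v
          · exact (TurnAux.no_triangle hGacyc hGij hGa hGb).elim
          · exact iff_of_false (fun h => hGb (TurnAux.skelAdj hD h.2))
              (fun h => hGb (TurnAux.skelAdj hE h.2))
        · exact iff_of_false (fun h => hGa (TurnAux.skelAdj hD h.1))
            (fun h => hGa (TurnAux.skelAdj hE h.1))
    · apply pair_iff' v a b hab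
      apply hdiff
      by_cases hai : a = i
      · subst hai
        have hbj : b ≠ j := fun hbj => hx (Or.inl ⟨rfl, hbj⟩)
        refine Or.inr ?_
        simp only [Finset.mem_insert, Finset.mem_singleton]
        push_neg
        exact ⟨Ne.symm hvj, Ne.symm hij_ne, Ne.symm hbj⟩
      · by_cases hbi : b = i
        · subst hbi
          have haj : a ≠ j := fun haj => hx (Or.inr ⟨haj, rfl⟩)
          refine Or.inr ?_
          simp only [Finset.mem_insert, Finset.mem_singleton]
          push_neg
          exact ⟨Ne.symm hvj, Ne.symm haj, Ne.symm hij_ne⟩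
        · refine Or.inl ?_
          simp only [Finset.mem_insert, Finset.mem_singleton]
          push_neg
          exact ⟨Ne.symm hvi, Ne.symm hai, Ne.symm hbi⟩
  have hP1i : ∀ a b : Fin p, a ≠ j → b ≠ j → a ≠ b →
      ((D.adj a i ∧ D.adj b i) ↔ (E.adj a i ∧ E.adj b i)) := by
    intro a b haj hbj hab
    apply pair_iff' i a b hab
    apply hdiff
    refine Or.inr ?_
    simp only [Finset.mem_insert, Finset.mem_singleton]
    push_neg
    exact ⟨Ne.symm hij_ne, Ne.symm haj, Ne.symm hbj⟩
  have hP1j : ∀ a b : Fin p, a ≠ i → b ≠ i → a ≠ b →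
      ((D.adj a j ∧ D.adj b j) ↔ (E.adj a j ∧ E.adj b j)) := by
    intro a b hai hbi hab
    apply pair_iff' j a b hab
    apply hdiff
    refine Or.inl ?_
    simp only [Finset.mem_insert, Finset.mem_singleton]
    push_neg
    exact ⟨hij_ne, Ne.symm hai, Ne.symm hbi⟩
  by_cases hDij : D.adj i j
  · by_cases hEji : E.adj j i
    · -- Case 1: reverse the edge i → j
      exact TurnAux.main_construct htree D E hD hE hGij
        (fun b _ _ => hDij) (fun b _ _ => hEji)
        (TurnAux.adj_asymm D hDij) (TurnAux.adj_asymm E hEji)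
        hP1i (fun a b hai hbi hab => (hP1j a b hai hbi hab).symm) hP1
    · -- Case 2: Si is empty; reverse the edge y → j where Sj = {y}
      have hEij : E.adj i j := (TurnAux.skel_or hE hGij).resolve_right hEji
      have hSi_empty : ∀ x, x ∉ Si := fun x hx => hEji (hPxE x hx).1
      obtain ⟨y, hy⟩ : Sj.Nonempty := by
        rcases h8 with ⟨x, hx, -⟩ | ⟨y, hy, -⟩
        · exact absurd hx (hSi_empty x)
        · exact ⟨y, hy⟩
      have hDyj : D.adj y j := (hPyD y hy).2
      have hEyj : ¬ E.adj y j := fun h => hPyE y hy ⟨hEij, h⟩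
      have hEjy : E.adj j y := (TurnAux.skel_or hE (hSj_adj y hy)).resolve_right hEyj
      have hSj_sing : ∀ y' ∈ Sj, y' = y := by
        intro y' hy'
        by_contra hne'
        have hsub : ({y, y'} : Finset (Fin p)) ⊆ Sj := by
          intro t ht
          rcases Finset.mem_insert.mp ht with rfl | ht
          · exact hy
          · rw [Finset.mem_singleton] at ht; exact ht ▸ hy'
        have h77 : D.imset {j, y, y'} = 1 := by
          refine Eq.trans ?_
            (h7 {y, y'} hsub (Finset.one_le_card.mpr ⟨y, Finset.mem_insert_self y {y'}⟩))
          exact TurnAux.imset_congr D fun t => by simp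
        rw [TurnAux.imset_triple hD hGacyc (hSj_adj y hy).symm (hSj_adj y' hy').symm
          (Ne.symm hne')] at h77
        have heq : E.imset {j, y, y'} = D.imset {j, y, y'} := by
          apply hdiff
          refine Or.inl ?_
          simp only [Finset.mem_insert, Finset.mem_singleton]
          push_neg
          exact ⟨hij_ne, Ne.symm (hSj_ni y hy), Ne.symm (hSj_ni y' hy')⟩
        exact hEyj ((pair_iff' j y y' (Ne.symm hne') heq).mp h77).1
      have hAux : ∀ c : Fin p, c ≠ y → (E.adj c j ↔ D.adj c j) := by
        intro c hcy
        by_cases hci : c = i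
        · subst hci; exact iff_of_true hEij hDij
        by_cases hcj : c = j
        · subst hcj; exact iff_of_false (TurnAux.adj_irrefl E _) (TurnAux.adj_irrefl D _)
        have hcSj : c ∉ Sj := fun h => hcy (hSj_sing c h)
        have heq : E.imset {j, i, c} = D.imset {j, i, c} := by
          rw [hswap j i c]
          exact (hkey c hci hcj).2.2 (hSi_empty c) hcSj
        have hiff := pair_iff' j i c (Ne.symm hci) heq
        constructor
        · intro h; exact (hiff.mpr ⟨hEij, h⟩).2
        · intro h; exact (hiff.mp ⟨hDij, h⟩).2
      refine TurnAux.main_construct htree D E hD hE (hSj_adj y hy).symm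
        (fun b _ _ => hDyj) (fun b _ _ => hEjy)
        (TurnAux.adj_asymm D hDyj) hEyj
        (fun a b _ _ hab => hP1 y (hSj_ni y hy) (hSj_nj y hy) a b hab)
        (fun a b hay hby _ => and_congr (hAux a hay) (hAux b hby))
        ?_
      intro v hvy hvj a b hab
      by_cases hvi : v = i
      · subst hvi
        by_cases haj : a = j
        · subst haj
          exact iff_of_false (fun h => TurnAux.adj_asymm D hDij h.1) (fun h => hEji h.1)
        by_cases hbj : b = j
        · subst hbj
          exact iff_of_false (fun h => TurnAux.adj_asymm D hDij h.2) (fun h => hEji h.2)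
        exact hP1i a b haj hbj hab
      · exact hP1 v hvi hvj a b hab
  · -- Case 3: Sj is empty; reverse the edge i → x where Si = {x}
    have hDji : D.adj j i := (TurnAux.skel_or hD hGij).resolve_left hDij
    have hSj_empty : ∀ y, y ∉ Sj := fun y hy => hDij (hPyD y hy).1
    obtain ⟨x, hx⟩ : Si.Nonempty := by
      rcases h8 with ⟨x, hx, -⟩ | ⟨y, hy, -⟩
      · exact ⟨x, hx⟩
      · exact absurd hy (hSj_empty y)
    have hEji : E.adj j i := (hPxE x hx).1
    have hExi : E.adj x i := (hPxE x hx).2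
    have hDxi : ¬ D.adj x i := fun h => hPxD x hx ⟨hDji, h⟩
    have hDix : D.adj i x := (TurnAux.skel_or hD (hSi_adj x hx)).resolve_right hDxi
    have hSi_sing : ∀ x' ∈ Si, x' = x := by
      intro x' hx'
      by_contra hne'
      have hsub : ({x, x'} : Finset (Fin p)) ⊆ Si := by
        intro t ht
        rcases Finset.mem_insert.mp ht with rfl | ht
        · exact hx
        · rw [Finset.mem_singleton] at ht; exact ht ▸ hx'
      have h66 : D.imset {i, x, x'} = 1 := by
        refine Eq.trans ?_
          (h6 {x, x'} hsub (Finset.one_le_card.mpr ⟨x, Finset.mem_insert_self x {x'}⟩))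
        exact TurnAux.imset_congr D fun t => by simp
      rw [TurnAux.imset_triple hD hGacyc (hSi_adj x hx).symm (hSi_adj x' hx').symm
        (Ne.symm hne')] at h66
      exact hDxi h66.1
    have hAux : ∀ c : Fin p, c ≠ x → (D.adj c i ↔ E.adj c i) := by
      intro c hcx
      by_cases hcj : c = j
      · subst hcj; exact iff_of_true hDji hEji
      by_cases hci : c = i
      · subst hci; exact iff_of_false (TurnAux.adj_irrefl D _) (TurnAux.adj_irrefl E _)
      have hcSi : c ∉ Si := fun h => hcx (hSi_sing c h)
      have heq : E.imset {i, j, c} = D.imset {i, j, c} :=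
        (hkey c hci hcj).2.2 hcSi (hSj_empty c)
      have hiff := pair_iff' i j c (Ne.symm hcj) heq
      constructor
      · intro h; exact (hiff.mp ⟨hDji, h⟩).2
      · intro h; exact (hiff.mpr ⟨hEji, h⟩).2
    refine TurnAux.main_construct htree D E hD hE (hSi_adj x hx)
      (fun b _ _ => hDix) (fun b _ _ => hExi)
      hDxi (TurnAux.adj_asymm E hExi)
      (fun a b hax hbx _ => and_congr (hAux a hax) (hAux b hbx))
      (fun a b _ _ hab => (hP1 x (hSi_ni x hx) (hSi_nj x hx) a b hab).symm)
      ?_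
    intro v hvi hvx a b hab
    by_cases hvj : v = j
    · subst hvj
      by_cases hai : a = i
      · subst hai
        exact iff_of_false (fun h => hDij h.1) (fun h => TurnAux.adj_asymm E hEji h.1)
      by_cases hbi : b = i
      · subst hbi
        exact iff_of_false (fun h => hDij h.2) (fun h => TurnAux.adj_asymm E hEji h.2)
      exact hP1j a b hai hbi hab
    · exact hP1 v hvi hvj a b hab
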